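/- Let 0 < c₃ ≤ c₂ ≤ c₁ and define f(s) = √((s + c₁²)(s + c₂²)(s + c₃²)) for s ≥ 0. For each i ∈ {1,2,3}, the integral α_i := c₁ c₂ c₃ ∫₀^∞ ds / ((c_i² + s) f(s)) is finite and satisfies 2c₂c₃/(3c₁²) ≤ α_i ≤ 2c₁c₂/(3c₃²). -/

import Mathlib

open MeasureTheory

lemma aux_rpow_int (a : ℝ) (ha : 0 < a) :
    IntegrableOn (fun s : ℝ => (s + a) ^ (-(5/2) : ℝ)) (Set.Ioi 0) volume ∧
    ∫ s in Set.Ioi (0:ℝ), (s + a) ^ (-(5/2) : ℝ) = 2/3 * a ^ (-(3/2) : ℝ) := by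
  have hderiv : ∀ x ∈ Set.Ici (0:ℝ),
      HasDerivAt (fun s : ℝ => -(2/3) * (s + a) ^ (-(3/2):ℝ)) ((x + a) ^ (-(5/2):ℝ)) x := by
    intro x hx
    have hxa : 0 < x + a := add_pos_of_nonneg_of_pos hx ha
    have h1 : HasDerivAt (fun s : ℝ => s + a) 1 x := (hasDerivAt_id x).add_const a
    have h2 : HasDerivAt (fun s : ℝ => (s + a) ^ (-(3/2):ℝ))
        ((-(3/2)) * (x + a) ^ ((-(3/2):ℝ) - 1) * 1) x := by
      have h2' := (Real.hasDerivAt_rpow_const (x := x + a) (p := (-(3/2):ℝ)) (Or.inl hxa.ne')).comp x h1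
      exact h2'
    have h3 := h2.const_mul (-(2/3):ℝ)
    refine h3.congr_deriv ?_
    rw [show ((-(3/2):ℝ) - 1) = -(5/2) by norm_num]
    ring
  have hpos : ∀ x ∈ Set.Ioi (0:ℝ), 0 ≤ (x + a) ^ (-(5/2):ℝ) := by
    intro x hx
    exact Real.rpow_nonneg (by have := hx.out; linarith) _
  have htend : Filter.Tendsto (fun s : ℝ => -(2/3) * (s + a) ^ (-(3/2):ℝ))
      Filter.atTop (nhds 0) := by
    have h0 : Filter.Tendsto (fun s : ℝ => (s + a) ^ (-(3/2):ℝ)) Filter.atTop (nhds 0) := by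
      have := (tendsto_rpow_neg_atTop (by norm_num : (0:ℝ) < 3/2)).comp
        (Filter.tendsto_atTop_add_const_right Filter.atTop a Filter.tendsto_id)
      exact this
    have := h0.const_mul (-(2/3):ℝ)
    simpa using this
  refine ⟨integrableOn_Ioi_deriv_of_nonneg' hderiv hpos htend, ?_⟩
  rw [integral_Ioi_of_hasDerivAt_of_nonneg' hderiv hpos htend]
  rw [zero_add]
  ring

lemma aux_pow52 {x : ℝ} (hx : 0 < x) :
    x * Real.sqrt (x * x * x) = x ^ ((5:ℝ)/2) := by
  have h3 : x * x * x = x ^ (3:ℝ) := by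
    rw [show x ^ (3:ℝ) = x ^ ((3:ℕ):ℝ) by norm_num, Real.rpow_natCast]; ring
  rw [h3, Real.sqrt_eq_rpow, ← Real.rpow_mul hx.le]
  nth_rewrite 1 [show x = x ^ (1:ℝ) by rw [Real.rpow_one]]
  rw [← Real.rpow_add hx]
  norm_num

/-- bound on the coefficients `α_i`, Section 4.2.1 of the
paper. For `0 < c₃ ≤ c₂ ≤ c₁` and
`f(s) = √((s+c₁²)(s+c₂²)(s+c₃²))`, for each `i ∈ {1,2,3}` the integral
`α_i = c₁c₂c₃ ∫₀^∞ ds/((c_i²+s) f(s))` is finite and satisfies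
`2c₂c₃/(3c₁²) ≤ α_i ≤ 2c₁c₂/(3c₃²)`. -/
theorem stmt_14 (c₁ c₂ c₃ : ℝ) (h3 : 0 < c₃) (h32 : c₃ ≤ c₂) (h21 : c₂ ≤ c₁) :
    ∀ ci : ℝ, (ci = c₁ ∨ ci = c₂ ∨ ci = c₃) →
      IntegrableOn
        (fun s => 1 / ((ci ^ 2 + s) *
          Real.sqrt ((s + c₁ ^ 2) * (s + c₂ ^ 2) * (s + c₃ ^ 2))))
        (Set.Ioi 0) volume ∧
      2 * c₂ * c₃ / (3 * c₁ ^ 2) ≤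
        c₁ * c₂ * c₃ * ∫ s in Set.Ioi (0:ℝ),
          1 / ((ci ^ 2 + s) *
            Real.sqrt ((s + c₁ ^ 2) * (s + c₂ ^ 2) * (s + c₃ ^ 2))) ∧
      c₁ * c₂ * c₃ * (∫ s in Set.Ioi (0:ℝ),
          1 / ((ci ^ 2 + s) *
            Real.sqrt ((s + c₁ ^ 2) * (s + c₂ ^ 2) * (s + c₃ ^ 2)))) ≤
        2 * c₁ * c₂ / (3 * c₃ ^ 2) := by
  intro ci hci
  have h2 : 0 < c₂ := lt_of_lt_of_le h3 h32
  have h1 : 0 < c₁ := lt_of_lt_of_le h2 h21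
  have h31 : c₃ ≤ c₁ := le_trans h32 h21
  have hci3 : c₃ ≤ ci := by rcases hci with h | h | h <;> simp [h, h31, h32, le_refl]
  have hci1 : ci ≤ c₁ := by rcases hci with h | h | h <;> simp [h, h31, h21, le_refl]
  have hcisq : c₃ ^ 2 ≤ ci ^ 2 := by nlinarith
  have hcisq1 : ci ^ 2 ≤ c₁ ^ 2 := by nlinarith
  have hsq31 : c₃ ^ 2 ≤ c₁ ^ 2 := by nlinarith
  have hsq32 : c₃ ^ 2 ≤ c₂ ^ 2 := by nlinarith
  have hsq21 : c₂ ^ 2 ≤ c₁ ^ 2 := by nlinarith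
  set f : ℝ → ℝ := fun s => 1 / ((ci ^ 2 + s) *
      Real.sqrt ((s + c₁ ^ 2) * (s + c₂ ^ 2) * (s + c₃ ^ 2))) with hf
  -- pointwise bounds on Ioi 0
  have hbound : ∀ s ∈ Set.Ioi (0:ℝ),
      (s + c₁ ^ 2) ^ (-(5/2):ℝ) ≤ f s ∧ f s ≤ (s + c₃ ^ 2) ^ (-(5/2):ℝ) := by
    intro s hs
    have hs0 : 0 < s := hs
    have hA : 0 < s + c₃ ^ 2 := by positivity
    have hB : 0 < s + c₂ ^ 2 := by linarith
    have hC : 0 < s + c₁ ^ 2 := by linarith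
    have hD : 0 < ci ^ 2 + s := by nlinarith
    have hlow : (s + c₃ ^ 2) * Real.sqrt ((s + c₃ ^ 2) * (s + c₃ ^ 2) * (s + c₃ ^ 2)) ≤
        (ci ^ 2 + s) * Real.sqrt ((s + c₁ ^ 2) * (s + c₂ ^ 2) * (s + c₃ ^ 2)) := by
      have hp : (s + c₃ ^ 2) * (s + c₃ ^ 2) * (s + c₃ ^ 2) ≤
          (s + c₁ ^ 2) * (s + c₂ ^ 2) * (s + c₃ ^ 2) := by
        gcongr <;> linarith
      exact mul_le_mul (by linarith) (Real.sqrt_le_sqrt hp) (Real.sqrt_nonneg _) hD.le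
    have hhigh : (ci ^ 2 + s) * Real.sqrt ((s + c₁ ^ 2) * (s + c₂ ^ 2) * (s + c₃ ^ 2)) ≤
        (s + c₁ ^ 2) * Real.sqrt ((s + c₁ ^ 2) * (s + c₁ ^ 2) * (s + c₁ ^ 2)) := by
      have hp : (s + c₁ ^ 2) * (s + c₂ ^ 2) * (s + c₃ ^ 2) ≤
          (s + c₁ ^ 2) * (s + c₁ ^ 2) * (s + c₁ ^ 2) := by
        gcongr <;> linarith
      exact mul_le_mul (by linarith) (Real.sqrt_le_sqrt hp) (Real.sqrt_nonneg _) hC.le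
    rw [aux_pow52 hA] at hlow
    rw [aux_pow52 hC] at hhigh
    have hD5a : (0:ℝ) < (s + c₃ ^ 2) ^ ((5:ℝ)/2) := Real.rpow_pos_of_pos hA _
    constructor
    · rw [hf]
      simp only
      rw [Real.rpow_neg hC.le, ← one_div]
      exact one_div_le_one_div_of_le (by positivity) hhigh
    · rw [hf]
      simp only
      rw [Real.rpow_neg hA.le, ← one_div]
      exact one_div_le_one_div_of_le hD5a hlow
  have hmeas : AEStronglyMeasurable f (volume.restrict (Set.Ioi 0)) := by
    apply Measurable.aestronglyMeasurable
    fun_prop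
  obtain ⟨hint3, hval3⟩ := aux_rpow_int (c₃ ^ 2) (by positivity)
  obtain ⟨hint1, hval1⟩ := aux_rpow_int (c₁ ^ 2) (by positivity)
  -- integrability of f
  have hfint : IntegrableOn f (Set.Ioi 0) volume := by
    apply Integrable.mono' hint3 hmeas
    filter_upwards [ae_restrict_mem measurableSet_Ioi] with s hs
    rw [Real.norm_eq_abs, abs_of_nonneg]
    · exact (hbound s hs).2
    · have hs0 : (0:ℝ) < s := hs
      have hA : 0 < s + c₃ ^ 2 := by positivity
      positivity
  -- integral bounds
  have hle1 : ∫ s in Set.Ioi (0:ℝ), (s + c₁ ^ 2) ^ (-(5/2):ℝ) ≤ ∫ s in Set.Ioi (0:ℝ), f s :=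
    setIntegral_mono_on hint1 hfint measurableSet_Ioi (fun s hs => (hbound s hs).1)
  have hle3 : ∫ s in Set.Ioi (0:ℝ), f s ≤ ∫ s in Set.Ioi (0:ℝ), (s + c₃ ^ 2) ^ (-(5/2):ℝ) :=
    setIntegral_mono_on hfint hint3 measurableSet_Ioi (fun s hs => (hbound s hs).2)
  rw [hval1] at hle1
  rw [hval3] at hle3
  have hrp1 : (c₁ ^ 2 : ℝ) ^ (-(3/2):ℝ) = (c₁ ^ 3)⁻¹ := by
    rw [show ((c₁:ℝ) ^ 2) = c₁ ^ ((2:ℕ):ℝ) by rw [Real.rpow_natCast],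
      ← Real.rpow_natCast c₁ 3, ← Real.rpow_mul h1.le, ← Real.rpow_neg h1.le]
    norm_num
  have hrp3 : (c₃ ^ 2 : ℝ) ^ (-(3/2):ℝ) = (c₃ ^ 3)⁻¹ := by
    rw [show ((c₃:ℝ) ^ 2) = c₃ ^ ((2:ℕ):ℝ) by rw [Real.rpow_natCast],
      ← Real.rpow_natCast c₃ 3, ← Real.rpow_mul h3.le, ← Real.rpow_neg h3.le]
    norm_num
  rw [hrp1] at hle1
  rw [hrp3] at hle3
  have hc : (0:ℝ) < c₁ * c₂ * c₃ := by positivity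
  refine ⟨hfint, ?_, ?_⟩
  · have := mul_le_mul_of_nonneg_left hle1 hc.le
    have heq : c₁ * c₂ * c₃ * (2/3 * (c₁ ^ 3)⁻¹) = 2 * c₂ * c₃ / (3 * c₁ ^ 2) := by
      field_simp
    linarith [this, heq ▸ this]
  · have := mul_le_mul_of_nonneg_left hle3 hc.le
    have heq : c₁ * c₂ * c₃ * (2/3 * (c₃ ^ 3)⁻¹) = 2 * c₁ * c₂ / (3 * c₃ ^ 2) := by
      field_simp
    linarith [this, heq ▸ this]
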